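/- arXiv:1804.03426 — 2 statements merged into one kernel-verified Lean document; each statement's English description precedes it below -/
import Mathlib

section
/- For p = q = r = 0.05, the hybrid feedback strategy strictly outperforms the secret-key feedback strategy: Cin1(0.05,0.05,0.05) ⊊ Cin2(0.05,0.05,0.05). In particular, the point (R₁,R₂) = (1.0, 0.3) belongs to Cin2(0.05,0.05,0.05) but not to Cin1(0.05,0.05,0.05). -/
/-- The binary entropy function to base 2, with the convention h(0)=h(1)=0
(automatic since `Real.logb 2 0 = 0`). -/
noncomputable def binEnt (x : ℝ) : ℝ := -x * Real.logb 2 x - (1 - x) * Real.logb 2 (1 - x)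

/-- The binary convolution `a ⋆ b = a(1-b)+(1-a)b`. -/
def binConv (a b : ℝ) : ℝ := a * (1 - b) + (1 - a) * b

/-- Non-feedback inner bound for the Dueck-type example with `Z₀ → Z₁ → Z₂`. -/
noncomputable def Cin (p q r : ℝ) : Set (ℝ × ℝ) :=
  {R : ℝ × ℝ | 0 ≤ R.1 ∧ R.1 ≤ 1 - binEnt q ∧ 0 ≤ R.2 ∧ R.2 ≤ 1 - binEnt (binConv r q)}

/-- Secret-key feedback inner bound for the Dueck-type example with `Z₀ → Z₁ → Z₂`. -/
noncomputable def Cin1 (p q r : ℝ) : Set (ℝ × ℝ) :=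
  {R : ℝ × ℝ | 0 ≤ R.1 ∧ 0 ≤ R.2 ∧
    R.1 ≤ 1 - binEnt (binConv r q) + binEnt r ∧
    R.2 ≤ 1 - binEnt (binConv r q) + binEnt r ∧
    R.1 ≤ 2 - binEnt p - binEnt q ∧
    R.2 ≤ 2 - binEnt p - binEnt (binConv r q) ∧
    R.1 + R.2 ≤ 3 - binEnt p - binEnt q - binEnt (binConv r q)}

/-- Hybrid feedback inner bound for the Dueck-type example with `Z₀ → Z₁ → Z₂`. -/
noncomputable def Cin2 (p q r : ℝ) : Set (ℝ × ℝ) :=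
  {R : ℝ × ℝ | 0 ≤ R.1 ∧ 0 ≤ R.2 ∧
    R.1 ≤ 1 + binEnt q - binEnt (binConv r q) + binEnt r ∧
    R.2 ≤ 1 + binEnt r ∧
    R.1 ≤ 2 - binEnt p - binEnt q ∧
    R.2 ≤ 2 - binEnt p - binEnt (binConv r q) ∧
    R.1 + R.2 ≤ 3 - binEnt p - binEnt q - binEnt r}

/-- Cut-set outer bound for the Dueck-type example with `Z₀ → Z₁ → Z₂`. -/
noncomputable def Cout (p q r : ℝ) : Set (ℝ × ℝ) :=
  {R : ℝ × ℝ | 0 ≤ R.1 ∧ 0 ≤ R.2 ∧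
    R.1 ≤ 2 - binEnt p - binEnt q ∧
    R.2 ≤ 2 - binEnt p - binEnt (binConv r q) ∧
    R.1 + R.2 ≤ 3 - binEnt p - binEnt q - binEnt r}


lemma binEnt_eq_aux (x : ℝ) : binEnt x = Real.binEntropy x / Real.log 2 := by
  simp [binEnt, Real.binEntropy, Real.logb, Real.log_inv]
  ring

lemma aux_mono : Real.binEntropy 0.05 < Real.binEntropy 0.095 :=
  Real.binEntropy_strictMonoOn (by norm_num) (by norm_num) (by norm_num)

lemma aux_conc : (10/19 : ℝ) * Real.binEntropy 0.095 ≤ Real.binEntropy 0.05 := by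
  have h := Real.strictConcave_binEntropy.concaveOn.2 (show (0:ℝ) ∈ Set.Icc (0:ℝ) 1 by norm_num)
    (show (0.095:ℝ) ∈ Set.Icc (0:ℝ) 1 by norm_num)
    (show (0:ℝ) ≤ 9/19 by norm_num) (show (0:ℝ) ≤ 10/19 by norm_num)
    (show (9/19 : ℝ) + 10/19 = 1 by norm_num)
  simp only [smul_eq_mul, Real.binEntropy_zero, mul_zero, zero_add] at h
  exact le_of_le_of_eq h (by norm_num)

lemma aux_half : Real.binEntropy 0.05 ≤ 0.5 * Real.log 2 := by
  have h20 : Real.log 20 ≤ 5 * Real.log 2 := by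
    have h1 : Real.log 20 ≤ Real.log 32 := Real.log_le_log (by norm_num) (by norm_num)
    have h32 : Real.log 32 = 5 * Real.log 2 := by
      rw [show (32:ℝ) = 2^5 by norm_num, Real.log_pow]; push_cast; ring
    linarith
  have h19 : Real.log (20/19) ≤ 1/19 := by
    have := Real.log_le_sub_one_of_pos (show (0:ℝ) < 20/19 by norm_num)
    linarith
  have hE : Real.binEntropy 0.05 = 0.05 * Real.log 20 + 0.95 * Real.log (20/19) := by
    rw [Real.binEntropy]; norm_num
  have hl2 := Real.log_two_gt_d9
  rw [hE]; nlinarith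

/-- For `p = q = r = 0.05`, the hybrid feedback strategy strictly outperforms
the secret-key feedback strategy; the point `(1.0, 0.3)` witnesses the gap. -/
theorem Cin1_ssubset_Cin2 :
    Cin1 0.05 0.05 0.05 ⊂ Cin2 0.05 0.05 0.05 ∧
    ((1.0, 0.3) : ℝ × ℝ) ∈ Cin2 0.05 0.05 0.05 ∧
    ((1.0, 0.3) : ℝ × ℝ) ∉ Cin1 0.05 0.05 0.05 := by
  have hconv : binConv 0.05 0.05 = (0.095:ℝ) := by norm_num [binConv]
  have hL := Real.log_two_gt_d9
  have hL0 : (0:ℝ) < Real.log 2 := by linarith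
  set A := binEnt 0.05 with hA
  set B := binEnt (binConv 0.05 0.05) with hB
  have hAL : A * Real.log 2 = Real.binEntropy 0.05 := by
    rw [hA, binEnt_eq_aux]; field_simp
  have hBL : B * Real.log 2 = Real.binEntropy 0.095 := by
    rw [hB, hconv, binEnt_eq_aux]; field_simp
  have a0 : 0 ≤ Real.binEntropy 0.05 := Real.binEntropy_nonneg (by norm_num) (by norm_num)
  have b0 : 0 ≤ Real.binEntropy 0.095 := Real.binEntropy_nonneg (by norm_num) (by norm_num)
  have ab := aux_mono
  have conc := aux_conc
  have half := aux_half
  have b1 : Real.binEntropy 0.095 ≤ Real.log 2 := Real.binEntropy_le_log_two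
  have hA0 : 0 ≤ A := by nlinarith
  have hB0 : 0 ≤ B := by nlinarith
  have hAB : A < B := by nlinarith
  have h2AB : B ≤ 2 * A := by nlinarith
  have hAhalf : A ≤ 1/2 := by nlinarith
  have hB1 : B ≤ 1 := by nlinarith
  have hmem2 : ((1.0, 0.3) : ℝ × ℝ) ∈ Cin2 0.05 0.05 0.05 := by
    simp only [Cin2, Set.mem_setOf_eq]
    norm_num
    refine ⟨by linarith, by linarith, by linarith, by linarith, by linarith⟩
  have hnmem1 : ((1.0, 0.3) : ℝ × ℝ) ∉ Cin1 0.05 0.05 0.05 := by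
    intro h
    simp only [Cin1, Set.mem_setOf_eq] at h
    obtain ⟨-, -, h3, -⟩ := h
    norm_num at h3
    linarith
  have hsub : Cin1 0.05 0.05 0.05 ⊆ Cin2 0.05 0.05 0.05 := by
    rintro ⟨x, y⟩ ⟨h1, h2, h3, h4, h5, h6, h7⟩
    exact ⟨h1, h2, by linarith, by linarith, h5, h6, by linarith⟩
  exact ⟨⟨hsub, fun hsub2 => hnmem1 (hsub2 hmem2)⟩, hmem2, hnmem1⟩
end

section
/- For p = 0.25, q = 0.2, r = 0.3, the hybrid feedback strategy strictly outperforms the secret-key feedback strategy: Cin1(0.25,0.2,0.3) ⊊ Cin2(0.25,0.2,0.3). In particular, the point (R₁,R₂) = (0.35, 0.23) belongs to Cin2(0.25,0.2,0.3) but not to Cin1(0.25,0.2,0.3). -/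
section AuxBSC

private lemma binEnt_mul (x : ℝ) :
    binEnt x * Real.log 2 = -(x * Real.log x) - (1 - x) * Real.log (1 - x) := by
  have h2 : Real.log 2 ≠ 0 := ne_of_gt (Real.log_pos one_lt_two)
  simp only [binEnt, Real.logb]
  field_simp

private lemma eA : binEnt (1/4 : ℝ) * Real.log 2 = 2 * Real.log 2 - (3/4) * Real.log 3 := by
  have l1 : Real.log ((1:ℝ)/4) = -(2 * Real.log 2) := by
    rw [show (1:ℝ)/4 = (2^2)⁻¹ by norm_num, Real.log_inv, Real.log_pow]; push_cast; ring
  have l2 : Real.log ((3:ℝ)/4) = Real.log 3 - 2 * Real.log 2 := by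
    rw [show (3:ℝ)/4 = 3/2^2 by norm_num, Real.log_div (by norm_num) (by norm_num),
      Real.log_pow]; push_cast; ring
  have h := binEnt_mul (1/4)
  norm_num at h
  rw [l1, l2] at h
  rw [h]; ring

private lemma eB : binEnt (1/5 : ℝ) * Real.log 2 = Real.log 5 - (8/5) * Real.log 2 := by
  have l1 : Real.log ((1:ℝ)/5) = -Real.log 5 := by
    rw [show (1:ℝ)/5 = (5:ℝ)⁻¹ by norm_num, Real.log_inv]
  have l2 : Real.log ((4:ℝ)/5) = 2 * Real.log 2 - Real.log 5 := by
    rw [show (4:ℝ)/5 = 2^2/5 by norm_num, Real.log_div (by norm_num) (by norm_num),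
      Real.log_pow]; push_cast; ring
  have h := binEnt_mul (1/5)
  norm_num at h
  rw [l1, l2] at h
  rw [h]; ring

private lemma eC : binEnt (3/10 : ℝ) * Real.log 2 =
    Real.log 2 + Real.log 5 - (3/10) * Real.log 3 - (7/10) * Real.log 7 := by
  have l10 : Real.log (10:ℝ) = Real.log 2 + Real.log 5 := by
    rw [show (10:ℝ) = 2*5 by norm_num, Real.log_mul (by norm_num) (by norm_num)]
  have l1 : Real.log ((3:ℝ)/10) = Real.log 3 - (Real.log 2 + Real.log 5) := by
    rw [Real.log_div (by norm_num) (by norm_num), l10]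
  have l2 : Real.log ((7:ℝ)/10) = Real.log 7 - (Real.log 2 + Real.log 5) := by
    rw [Real.log_div (by norm_num) (by norm_num), l10]
  have h := binEnt_mul (3/10)
  norm_num at h
  rw [l1, l2] at h
  rw [h]; ring

private lemma eD : binEnt (19/50 : ℝ) * Real.log 2 =
    Real.log 2 + 2 * Real.log 5 - (19/50) * Real.log 19 - (31/50) * Real.log 31 := by
  have l50 : Real.log (50:ℝ) = Real.log 2 + 2 * Real.log 5 := by
    rw [show (50:ℝ) = 2*5^2 by norm_num, Real.log_mul (by norm_num) (by norm_num),
      Real.log_pow]; push_cast; ring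
  have l1 : Real.log ((19:ℝ)/50) = Real.log 19 - (Real.log 2 + 2 * Real.log 5) := by
    rw [Real.log_div (by norm_num) (by norm_num), l50]
  have l2 : Real.log ((31:ℝ)/50) = Real.log 31 - (Real.log 2 + 2 * Real.log 5) := by
    rw [Real.log_div (by norm_num) (by norm_num), l50]
  have h := binEnt_mul (19/50)
  norm_num at h
  rw [l1, l2] at h
  rw [h]; ring

private lemma logp2 {a b : ℝ} (ha : 0 < a) (hb : 0 < b) (m n : ℕ) :
    Real.log (a^m * b^n) = (m : ℝ) * Real.log a + (n : ℝ) * Real.log b := by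
  rw [Real.log_mul (pow_pos ha m).ne' (pow_pos hb n).ne', Real.log_pow, Real.log_pow]

private lemma logp3 {a b c : ℝ} (ha : 0 < a) (hb : 0 < b) (hc : 0 < c) (k m n : ℕ) :
    Real.log (a^k * b^m * c^n) =
      (k : ℝ) * Real.log a + (m : ℝ) * Real.log b + (n : ℝ) * Real.log c := by
  rw [Real.log_mul (by positivity) (pow_pos hc n).ne', logp2 ha hb, Real.log_pow]

private lemma logp4 {a b c d : ℝ} (ha : 0 < a) (hb : 0 < b) (hc : 0 < c) (hd : 0 < d)
    (j k m n : ℕ) :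
    Real.log (a^j * b^k * c^m * d^n) =
      (j : ℝ) * Real.log a + (k : ℝ) * Real.log b + (m : ℝ) * Real.log c
        + (n : ℝ) * Real.log d := by
  rw [Real.log_mul (by positivity) (pow_pos hd n).ne', logp3 ha hb hc, Real.log_pow]

private lemma f1 : 8 * Real.log 2 ≤ 5 * Real.log 5 := by
  have h := Real.log_le_log (by positivity) (show ((2:ℝ)^8 ≤ 5^5) by norm_num)
  rw [Real.log_pow, Real.log_pow] at h
  push_cast at h; linarith

private lemma fC : 3 * Real.log 3 + 7 * Real.log 7 ≤ 10 * Real.log 2 + 10 * Real.log 5 := by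
  have h := Real.log_le_log (by positivity)
    (show ((3:ℝ)^3 * 7^7 ≤ 2^10 * 5^10) by norm_num)
  rw [logp2 (by norm_num) (by norm_num), logp2 (by norm_num) (by norm_num)] at h
  push_cast at h; linarith

private lemma f2 : 19 * Real.log 19 + 31 * Real.log 31 ≤ 50 * Real.log 2 + 100 * Real.log 5 := by
  have h := Real.log_le_log (by positivity)
    (show ((19:ℝ)^19 * 31^31 ≤ 2^50 * 5^100) by norm_num)
  rw [logp2 (by norm_num) (by norm_num), logp2 (by norm_num) (by norm_num)] at h
  push_cast at h; linarith

private lemma f3 : 19 * Real.log 19 + 31 * Real.log 31 ≤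
    15 * Real.log 3 + 50 * Real.log 5 + 35 * Real.log 7 := by
  have h := Real.log_le_log (by positivity)
    (show ((19:ℝ)^19 * 31^31 ≤ 3^15 * 5^50 * 7^35) by norm_num)
  rw [logp2 (by norm_num) (by norm_num), logp3 (by norm_num) (by norm_num) (by norm_num)] at h
  push_cast at h; linarith

private lemma f4 : 95 * Real.log 2 + 30 * Real.log 3 + 70 * Real.log 7 ≤
    38 * Real.log 19 + 62 * Real.log 31 := by
  have h := Real.log_le_log (by positivity)
    (show ((2:ℝ)^95 * 3^30 * 7^70 ≤ 19^38 * 31^62) by norm_num)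
  rw [logp3 (by norm_num) (by norm_num) (by norm_num), logp2 (by norm_num) (by norm_num)] at h
  push_cast at h; linarith

private lemma f5 : 4 * Real.log 5 ≤ 5 * Real.log 2 + 3 * Real.log 3 := by
  have h := Real.log_le_log (by positivity)
    (show ((5:ℝ)^4 ≤ 2^5 * 3^3) by norm_num)
  rw [Real.log_pow, logp2 (by norm_num) (by norm_num)] at h
  push_cast at h; linarith

private lemma f6 : 123 * Real.log 2 + 200 * Real.log 5 ≤
    75 * Real.log 3 + 38 * Real.log 19 + 62 * Real.log 31 := by
  have h := Real.log_le_log (by positivity)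
    (show ((2:ℝ)^123 * 5^200 ≤ 3^75 * 19^38 * 31^62) by norm_num)
  rw [logp2 (by norm_num) (by norm_num), logp3 (by norm_num) (by norm_num) (by norm_num)] at h
  push_cast at h; linarith

private lemma f7 : 200 * Real.log 5 ≤
    102 * Real.log 2 + 105 * Real.log 3 + 70 * Real.log 7 := by
  have h := Real.log_le_log (by positivity)
    (show ((5:ℝ)^200 ≤ 2^102 * 3^105 * 7^70) by norm_num)
  rw [Real.log_pow, logp3 (by norm_num) (by norm_num) (by norm_num)] at h
  push_cast at h; linarith

private lemma f8 : 102 * Real.log 2 + 75 * Real.log 3 + 38 * Real.log 19 + 62 * Real.log 31 <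
    300 * Real.log 5 := by
  have h := Real.log_lt_log (by positivity)
    (show ((2:ℝ)^102 * 3^75 * 19^38 * 31^62 < 5^300) by
      rw [show (300:ℕ) = 150 * 2 by norm_num, pow_mul]; norm_num)
  rw [Real.log_pow, logp4 (by norm_num) (by norm_num) (by norm_num) (by norm_num)] at h
  push_cast at h; linarith

private lemma log2pos : (0:ℝ) < Real.log 2 := Real.log_pos one_lt_two

private lemma div_log2 {x c : ℝ} (h : x * Real.log 2 ≤ c * Real.log 2) : x ≤ c :=
  le_of_mul_le_mul_right h log2pos

-- bounds on the entropy values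
private lemma bB0 : (0:ℝ) ≤ binEnt (1/5 : ℝ) := by
  have : (0:ℝ) * Real.log 2 ≤ binEnt (1/5 : ℝ) * Real.log 2 := by
    rw [eB]; nlinarith [f1]
  linarith [div_log2 this]

private lemma bC0 : (0:ℝ) ≤ binEnt (3/10 : ℝ) := by
  have : (0:ℝ) * Real.log 2 ≤ binEnt (3/10 : ℝ) * Real.log 2 := by
    rw [eC]; nlinarith [fC]
  linarith [div_log2 this]

private lemma bD0 : (0:ℝ) ≤ binEnt (19/50 : ℝ) := by
  have : (0:ℝ) * Real.log 2 ≤ binEnt (19/50 : ℝ) * Real.log 2 := by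
    rw [eD]; nlinarith [f2]
  linarith [div_log2 this]

private lemma bCD : binEnt (3/10 : ℝ) ≤ binEnt (19/50 : ℝ) := by
  apply div_log2
  rw [eC, eD]; nlinarith [f3]

private lemma bAB : binEnt (1/4 : ℝ) + binEnt (1/5 : ℝ) ≤ 33/20 := by
  apply div_log2
  rw [add_mul, eA, eB]; nlinarith [f5]

private lemma bAD : binEnt (1/4 : ℝ) + binEnt (19/50 : ℝ) ≤ 177/100 := by
  apply div_log2
  rw [add_mul, eA, eD]; nlinarith [f6]

private lemma bABC : binEnt (1/4 : ℝ) + binEnt (1/5 : ℝ) + binEnt (3/10 : ℝ) ≤ 121/50 := by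
  apply div_log2
  rw [add_mul, add_mul, eA, eB, eC]; nlinarith [f7]

private lemma bBCD : (-13/20 : ℝ) ≤ binEnt (1/5 : ℝ) + binEnt (3/10 : ℝ) - binEnt (19/50 : ℝ) := by
  apply div_log2
  rw [sub_mul, add_mul, eB, eC, eD]; nlinarith [f4]

private lemma bABD : (121/50 : ℝ) < binEnt (1/4 : ℝ) + binEnt (1/5 : ℝ) + binEnt (19/50 : ℝ) := by
  have h : (121/50 : ℝ) * Real.log 2 <
      (binEnt (1/4 : ℝ) + binEnt (1/5 : ℝ) + binEnt (19/50 : ℝ)) * Real.log 2 := by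
    rw [add_mul, add_mul, eA, eB, eD]; nlinarith [f8]
  exact lt_of_mul_lt_mul_right h (le_of_lt log2pos)

end AuxBSC

/-- For `p = 0.25`, `q = 0.2`, `r = 0.3`, the hybrid feedback strategy strictly
outperforms the secret-key feedback strategy; the point `(0.35, 0.23)` witnesses the gap. -/
theorem Cin1_ssubset_Cin2' :
    Cin1 0.25 0.2 0.3 ⊂ Cin2 0.25 0.2 0.3 ∧
    ((0.35, 0.23) : ℝ × ℝ) ∈ Cin2 0.25 0.2 0.3 ∧
    ((0.35, 0.23) : ℝ × ℝ) ∉ Cin1 0.25 0.2 0.3 := by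
  have hconv : binConv (3/10) (1/5) = (19/50 : ℝ) := by norm_num [binConv]
  have h25 : (0.25:ℝ) = 1/4 := by norm_num
  have h20 : (0.2:ℝ) = 1/5 := by norm_num
  have h30 : (0.3:ℝ) = 3/10 := by norm_num
  have hmem : ((0.35, 0.23) : ℝ × ℝ) ∈ Cin2 0.25 0.2 0.3 := by
    simp only [Cin2, Set.mem_setOf_eq, hconv, h25, h20, h30]
    norm_num
    refine ⟨?_, ?_, ?_, ?_, ?_⟩
    · linarith [bBCD, bB0, bC0, bD0]
    · linarith [bC0]
    · linarith [bAB]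
    · linarith [bAD]
    · linarith [bABC]
  have hnot : ((0.35, 0.23) : ℝ × ℝ) ∉ Cin1 0.25 0.2 0.3 := by
    simp only [Cin1, Set.mem_setOf_eq, hconv, h25, h20, h30]
    intro h
    have h7 := h.2.2.2.2.2.2
    norm_num at h7
    linarith [bABD]
  have hsub : Cin1 0.25 0.2 0.3 ⊆ Cin2 0.25 0.2 0.3 := by
    intro R hR
    simp only [Cin1, Set.mem_setOf_eq, hconv, h25, h20, h30] at hR
    obtain ⟨g1, g2, g3, g4, g5, g6, g7⟩ := hR
    simp only [Cin2, Set.mem_setOf_eq, hconv, h25, h20, h30]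
    refine ⟨g1, g2, ?_, ?_, g5, g6, ?_⟩
    · linarith [bB0]
    · linarith [bD0]
    · linarith [bCD]
  exact ⟨⟨hsub, fun hsup => hnot (hsup hmem)⟩, hmem, hnot⟩
end
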